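/- Let A, B be Hermitian positive semidefinite n×n matrices such that tr(A) = tr(A^{1/2} B A^{1/2}) = tr(B A^{1/2} B A^{1/2}). Then A^{1/2} B A^{1/2} = A, i.e., A is a fixed point of the map Λ ↦ Λ^{1/2} B Λ^{1/2}. -/

import Mathlib

open Matrix ComplexOrder
noncomputable def Matrix.PosSemidef.sqrt {n 𝕜 : Type*} [Fintype n] [DecidableEq n] [RCLike 𝕜]
    {A : Matrix n n 𝕜} (hA : A.PosSemidef) : Matrix n n 𝕜 :=
  hA.1.eigenvectorUnitary.1 * diagonal ((↑) ∘ (Real.sqrt ∘ hA.1.eigenvalues)) *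
    (star hA.1.eigenvectorUnitary : Matrix n n 𝕜)

lemma Matrix.PosSemidef.posSemidef_sqrt {n 𝕜 : Type*} [Fintype n] [DecidableEq n] [RCLike 𝕜]
    {A : Matrix n n 𝕜} (hA : A.PosSemidef) : hA.sqrt.PosSemidef := by
  unfold Matrix.PosSemidef.sqrt
  have hd : (diagonal ((↑) ∘ (Real.sqrt ∘ hA.1.eigenvalues)) : Matrix n n 𝕜).PosSemidef := by
    rw [posSemidef_diagonal_iff]
    intro i
    simp [Real.sqrt_nonneg]
  have := hd.mul_mul_conjTranspose_same (hA.1.eigenvectorUnitary.1)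
  simpa [Matrix.star_eq_conjTranspose] using this

lemma Matrix.PosSemidef.sqrt_mul_self {n 𝕜 : Type*} [Fintype n] [DecidableEq n] [RCLike 𝕜]
    {A : Matrix n n 𝕜} (hA : A.PosSemidef) : hA.sqrt * hA.sqrt = A := by
  unfold Matrix.PosSemidef.sqrt
  conv_rhs => rw [hA.1.spectral_theorem]
  have hU : (star hA.1.eigenvectorUnitary : Matrix n n 𝕜) * hA.1.eigenvectorUnitary.1 = 1 :=
    Unitary.coe_star_mul_self _
  rw [Unitary.conjStarAlgAut_apply]
  calc _ = hA.1.eigenvectorUnitary.1 * diagonal ((↑) ∘ (Real.sqrt ∘ hA.1.eigenvalues))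
        * ((star hA.1.eigenvectorUnitary : Matrix n n 𝕜) * hA.1.eigenvectorUnitary.1)
        * diagonal ((↑) ∘ (Real.sqrt ∘ hA.1.eigenvalues)) *
          (star hA.1.eigenvectorUnitary : Matrix n n 𝕜) := by simp only [Matrix.mul_assoc]
    _ = _ := by
      rw [hU, Matrix.mul_one, Matrix.mul_assoc _ (diagonal _) (diagonal _), diagonal_mul_diagonal]
      congr 3
      funext i
      simp only [Function.comp_apply, ← RCLike.ofReal_mul]
      rw [Real.mul_self_sqrt (hA.eigenvalues_nonneg i)]

lemma aux_trace_zero {m : ℕ} (M : Matrix (Fin m) (Fin m) ℂ)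
    (h : (Mᴴ * M).trace = 0) : M = 0 := by
  have key : (Mᴴ * M).trace = ((∑ j, ∑ i, Complex.normSq (M i j) : ℝ) : ℂ) := by
    simp only [Matrix.trace, Matrix.diag, Matrix.mul_apply, Matrix.conjTranspose_apply]
    push_cast
    congr 1; ext j; congr 1; ext i
    rw [Complex.normSq_eq_conj_mul_self]; rfl
  rw [key, Complex.ofReal_eq_zero] at h
  have hall : ∀ j ∈ Finset.univ, ∑ i, Complex.normSq (M i j) = 0 :=
    (Finset.sum_eq_zero_iff_of_nonneg (fun j _ => Finset.sum_nonneg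
      (fun i _ => Complex.normSq_nonneg _))).mp h
  ext i j
  have := (Finset.sum_eq_zero_iff_of_nonneg
    (fun i _ => Complex.normSq_nonneg (M i j))).mp (hall j (Finset.mem_univ _)) i
    (Finset.mem_univ _)
  simpa using Complex.normSq_eq_zero.mp this

/-- equal traces of the first iterates force `A^{1/2} B A^{1/2} = A`. -/
theorem stmt_4 (n : ℕ) (A B : Matrix (Fin n) (Fin n) ℂ)
    (hA : A.PosSemidef) (hB : B.PosSemidef)
    (h1 : (hA.sqrt * B * hA.sqrt).trace = A.trace)
    (h2 : (B * hA.sqrt * B * hA.sqrt).trace = A.trace) :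
    hA.sqrt * B * hA.sqrt = A := by
  set S := hA.sqrt with hSdef
  have hS : S.PosSemidef := hA.posSemidef_sqrt
  set R := hS.sqrt with hRdef
  have hR : R.PosSemidef := hS.posSemidef_sqrt
  have hRR : R * R = S := hS.sqrt_mul_self
  have hSS : S * S = A := hA.sqrt_mul_self
  set D := B - 1 with hDdef
  have hDH : Dᴴ = D := by
    simp [hDdef, Matrix.conjTranspose_sub, hB.1.eq]
  set H := R * D * R with hHdef
  have hHH : Hᴴ = H := by
    simp [hHdef, Matrix.conjTranspose_mul, hDH, hR.1.eq, Matrix.mul_assoc]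
  -- trace (Hᴴ * H) = trace (D*S*D*S)
  have htr1 : (Hᴴ * H).trace = (D * S * D * S).trace := by
    rw [hHH]
    have : H * H = R * (D * S * D * R) := by
      rw [hHdef]
      rw [show R * D * R * (R * D * R) = R * D * (R * R) * D * R by
        simp only [Matrix.mul_assoc]]
      rw [hRR]; simp only [Matrix.mul_assoc]
    rw [this, Matrix.trace_mul_comm]
    rw [show D * S * D * R * R = D * S * D * (R * R) by simp only [Matrix.mul_assoc]]
    rw [hRR]
  -- expand trace (D*S*D*S)
  have hBSS : (B * S * S).trace = A.trace := by
    have e : (S * B * S).trace = (B * S * S).trace := by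
      rw [Matrix.mul_assoc, Matrix.trace_mul_comm]
    rw [← e]; exact h1
  have hexp : (D * S * D * S).trace = 0 := by
    have expand : D * S * D * S =
        B * S * B * S - S * B * S - B * S * S + S * S := by
      simp only [hDdef, Matrix.sub_mul, Matrix.mul_sub, Matrix.one_mul, Matrix.mul_one]
      abel
    rw [expand]
    rw [Matrix.trace_add, Matrix.trace_sub, Matrix.trace_sub, h2, h1, hBSS, hSS]
    ring
  have hH0 : H = 0 := aux_trace_zero H (by rw [htr1, hexp])
  -- S * D * S = R * H * R = 0
  have hSDS : S * D * S = 0 := by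
    have : S * D * S = R * (H * R) := by
      rw [hHdef, ← hRR]
      simp only [Matrix.mul_assoc]
    rw [this, hH0, Matrix.zero_mul, Matrix.mul_zero]
  have : S * B * S - S * S = 0 := by
    have e : S * D * S = S * B * S - S * S := by
      simp only [hDdef, Matrix.sub_mul, Matrix.mul_sub, Matrix.mul_one]
    rw [← e, hSDS]
  rw [hSS] at this
  linear_combination (norm := (rw [hSdef] at this ⊢; abel_nf)) this
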